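/- Let x > 0, a ∈ ℝ with 0 ≤ a < K for a positive integer K, ω = e^{-πi/4}, and H_K := ∫_0^∞ e^{-2πKωτ} · 2e^{-πxτ²} sinh(2πaωτ)/(e^{2πωτ} - 1) dτ. Then |H_K| ≤ √2·(2a)/(2π(K-a)), and consequently H_K → 0 as K → ∞. -/

import Mathlib

open MeasureTheory Filter

noncomputable def omg : ℂ := Complex.exp (-(Real.pi : ℂ) * Complex.I / 4)

/-- `H_K := ∫_0^∞ e^{-2πKωτ}·2e^{-πxτ²} sinh(2πaωτ)/(e^{2πωτ} - 1) dτ`. -/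
noncomputable def Hfun (x a : ℝ) (K : ℕ) : ℂ :=
  ∫ τ in Set.Ioi (0:ℝ),
    Complex.exp (-2 * (Real.pi : ℂ) * (K : ℂ) * omg * (τ : ℂ)) *
      (2 * Complex.exp (-(Real.pi : ℂ) * (x : ℂ) * (τ : ℂ) ^ 2) *
        Complex.sinh (2 * (Real.pi : ℂ) * (a : ℂ) * omg * (τ : ℂ))) /
      (Complex.exp (2 * (Real.pi : ℂ) * omg * (τ : ℂ)) - 1)

open Real Set

lemma omg_eq : omg = ((Real.sqrt 2 / 2 : ℝ) : ℂ) * (1 - Complex.I) := by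
  have h : -(Real.pi : ℂ) * Complex.I / 4 = ((-(Real.pi/4) : ℝ) : ℂ) * Complex.I := by
    push_cast; ring
  rw [omg, h, Complex.exp_mul_I, ← Complex.ofReal_cos, ← Complex.ofReal_sin,
    Real.cos_neg, Real.sin_neg, Real.cos_pi_div_four, Real.sin_pi_div_four]
  push_cast; ring

lemma L2 {u : ℝ} (hu : 0 ≤ u) :
    2 * u ^ 2 ≤ (exp u * cos u - 1) ^ 2 + (exp u * sin u) ^ 2 := by
  have hpyth : (exp u * cos u - 1) ^ 2 + (exp u * sin u) ^ 2
      = (exp u - 1) ^ 2 + 2 * exp u * (1 - cos u) := by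
    linear_combination (exp u ^ 2) * sin_sq_add_cos_sq u
  rw [hpyth]
  have hexp : 1 + u ≤ exp u := by linarith [add_one_le_exp u]
  rcases le_or_gt u 1 with h1 | h1
  · have hcb := Real.cos_bound (x := u) (by rw [abs_of_nonneg hu]; exact h1)
    have hcos : u ^ 2 / 2 - u ^ 4 * (5 / 96) ≤ 1 - cos u := by
      have := (abs_le.1 hcb).2
      rw [abs_of_nonneg hu] at this; linarith
    have hsq : u ^ 2 ≤ (exp u - 1) ^ 2 := by nlinarith
    have h4 : u ^ 4 ≤ u ^ 3 := pow_le_pow_of_le_one hu h1 (by norm_num)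
    have h5 : u ^ 5 ≤ u ^ 3 := pow_le_pow_of_le_one hu h1 (by norm_num)
    have hnn : 0 ≤ u ^ 2 / 2 - u ^ 4 * (5 / 96) := by nlinarith
    have hmul : 2 * (1 + u) * (u ^ 2 / 2 - u ^ 4 * (5 / 96)) ≤ 2 * exp u * (1 - cos u) := by
      apply mul_le_mul (by linarith) hcos hnn (by positivity)
    nlinarith
  · have h27 : (2.7182818283 : ℝ) < exp 1 := exp_one_gt_d9
    have he : (2.7 : ℝ) * u ≤ exp u := by
      calc (2.7 : ℝ) * u ≤ exp 1 * exp (u - 1) := by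
            have := add_one_le_exp (u - 1)
            nlinarith [exp_pos 1]
        _ = exp u := by rw [← exp_add]; ring_nf
    have h10 : (2.7 * u - 1) ^ 2 ≤ (exp u - 1) ^ 2 := by nlinarith
    nlinarith [sq_nonneg (u - 1), cos_le_one u, exp_pos u]

lemma L1 {u : ℝ} (hu : 0 ≤ u) :
    (1 - exp (-u) * cos u) ^ 2 + (exp (-u) * sin u) ^ 2 ≤ 2 * u ^ 2 := by
  have hpyth : (1 - exp (-u) * cos u) ^ 2 + (exp (-u) * sin u) ^ 2
      = (1 - exp (-u)) ^ 2 + 2 * exp (-u) * (1 - cos u) := by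
    linear_combination (exp (-u) ^ 2) * sin_sq_add_cos_sq u
  rw [hpyth]
  have h1 : 1 - exp (-u) ≤ u := by linarith [add_one_le_exp (-u)]
  have h2 : 0 ≤ 1 - exp (-u) := by
    have : exp (-u) ≤ exp 0 := exp_le_exp.2 (by linarith)
    simpa using this
  have h3 : 1 - cos u ≤ u ^ 2 / 2 := by linarith [one_sub_sq_div_two_le_cos (x := u)]
  have h4 : exp (-u) ≤ 1 := by
    have : exp (-u) ≤ exp 0 := exp_le_exp.2 (by linarith)
    simpa using this
  have h5 : 0 ≤ 1 - cos u := by linarith [cos_le_one u]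
  nlinarith [exp_pos (-u)]

lemma LA {u : ℝ} (hu : 0 ≤ u) :
    Real.sqrt 2 * u ≤ ‖Complex.exp ((u : ℂ) * (1 - Complex.I)) - 1‖ := by
  have hns : Complex.normSq (Complex.exp ((u : ℂ) * (1 - Complex.I)) - 1)
      = (exp u * cos u - 1) ^ 2 + (exp u * sin u) ^ 2 := by
    simp [Complex.normSq_apply, Complex.exp_re, Complex.exp_im, Complex.sub_re, Complex.sub_im,
      Complex.mul_re, Complex.mul_im]
    ring
  rw [Complex.norm_def, hns]
  have : Real.sqrt 2 * u = Real.sqrt (2 * u ^ 2) := by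
    rw [Real.sqrt_mul (by norm_num), Real.sqrt_sq hu]
  rw [this]
  exact Real.sqrt_le_sqrt (L2 hu)

lemma LB {u : ℝ} (hu : 0 ≤ u) :
    ‖1 - Complex.exp (-((u : ℂ) * (1 - Complex.I)))‖ ≤ Real.sqrt 2 * u := by
  have hns : Complex.normSq (1 - Complex.exp (-((u : ℂ) * (1 - Complex.I))))
      = (1 - exp (-u) * cos u) ^ 2 + (exp (-u) * sin u) ^ 2 := by
    simp [Complex.normSq_apply, Complex.exp_re, Complex.exp_im, Complex.sub_re, Complex.sub_im,
      Complex.mul_re, Complex.mul_im]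
    ring
  rw [Complex.norm_def, hns]
  have h2 : Real.sqrt 2 * u = Real.sqrt (2 * u ^ 2) := by
    rw [Real.sqrt_mul (by norm_num), Real.sqrt_sq hu]
  rw [h2]
  exact Real.sqrt_le_sqrt (L1 hu)

lemma absExp (r : ℝ) : ‖Complex.exp ((r : ℂ) * (1 - Complex.I))‖ = Real.exp r := by
  rw [Complex.norm_exp]
  congr 1
  simp [Complex.mul_re]

lemma sinh_bound {r : ℝ} (hr : 0 ≤ r) :
    ‖Complex.sinh ((r : ℂ) * (1 - Complex.I))‖ ≤ Real.sqrt 2 * r * Real.exp r := by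
  have key : Complex.exp (-((r : ℂ) * (1 - Complex.I)))
      = Complex.exp ((r : ℂ) * (1 - Complex.I)) *
        Complex.exp (-(((2 * r : ℝ) : ℂ) * (1 - Complex.I))) := by
    rw [← Complex.exp_add]; congr 1; push_cast; ring
  have hz : Complex.sinh ((r : ℂ) * (1 - Complex.I))
      = Complex.exp ((r : ℂ) * (1 - Complex.I)) *
        (1 - Complex.exp (-(((2 * r : ℝ) : ℂ) * (1 - Complex.I)))) / 2 := by
    rw [Complex.sinh, key]; ring
  rw [hz, norm_div, norm_mul, absExp]
  have h2 : ‖(2 : ℂ)‖ = 2 := by norm_num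
  rw [h2]
  have hLB := LB (u := 2 * r) (by linarith)
  calc Real.exp r * ‖1 - Complex.exp (-(((2 * r : ℝ) : ℂ) * (1 - Complex.I)))‖ / 2
      ≤ Real.exp r * (Real.sqrt 2 * (2 * r)) / 2 := by gcongr
    _ = Real.sqrt 2 * r * Real.exp r := by ring

lemma point_bound (a x : ℝ) (ha : 0 ≤ a) (hx : 0 ≤ x) (K : ℕ) {τ : ℝ} (hτ : 0 < τ) :
    ‖Complex.exp (-2 * (Real.pi : ℂ) * (K : ℂ) * omg * (τ : ℂ)) *
      (2 * Complex.exp (-(Real.pi : ℂ) * (x : ℂ) * (τ : ℂ) ^ 2) *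
        Complex.sinh (2 * (Real.pi : ℂ) * (a : ℂ) * omg * (τ : ℂ))) /
      (Complex.exp (2 * (Real.pi : ℂ) * omg * (τ : ℂ)) - 1)‖
    ≤ 2 * a * Real.exp (-(Real.sqrt 2 * Real.pi * ((K : ℝ) - a)) * τ) := by
  have hπ := Real.pi_pos
  have hs2 : (0:ℝ) < Real.sqrt 2 := by positivity
  set t : ℝ := Real.sqrt 2 * Real.pi * τ with htdef
  have ht : 0 < t := by positivity
  have e1 : -2 * (Real.pi : ℂ) * (K : ℂ) * omg * (τ : ℂ)
      = ((-((K : ℝ) * t) : ℝ) : ℂ) * (1 - Complex.I) := by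
    rw [omg_eq, htdef]; push_cast; ring
  have e2 : -(Real.pi : ℂ) * (x : ℂ) * (τ : ℂ) ^ 2 = ((-(Real.pi * x * τ ^ 2) : ℝ) : ℂ) := by
    push_cast; ring
  have e3 : 2 * (Real.pi : ℂ) * (a : ℂ) * omg * (τ : ℂ)
      = ((a * t : ℝ) : ℂ) * (1 - Complex.I) := by
    rw [omg_eq, htdef]; push_cast; ring
  have e4 : 2 * (Real.pi : ℂ) * omg * (τ : ℂ) = ((t : ℝ) : ℂ) * (1 - Complex.I) := by
    rw [omg_eq, htdef]; push_cast; ring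
  rw [e1, e2, e3, e4, norm_div, norm_mul, norm_mul, norm_mul]
  have hE1 : ‖Complex.exp (((-((K : ℝ) * t) : ℝ) : ℂ) * (1 - Complex.I))‖
      = Real.exp (-((K : ℝ) * t)) := absExp _
  have hE2 : ‖Complex.exp ((-(Real.pi * x * τ ^ 2) : ℝ) : ℂ)‖
      = Real.exp (-(Real.pi * x * τ ^ 2)) := Complex.norm_exp_ofReal _
  have hE2le : ‖Complex.exp ((-(Real.pi * x * τ ^ 2) : ℝ) : ℂ)‖ ≤ 1 := by
    rw [hE2, Real.exp_le_one_iff]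
    exact neg_nonpos.2 (by positivity)
  have hS : ‖Complex.sinh (((a * t : ℝ) : ℂ) * (1 - Complex.I))‖
      ≤ Real.sqrt 2 * (a * t) * Real.exp (a * t) := sinh_bound (by positivity)
  have hD : Real.sqrt 2 * t ≤ ‖Complex.exp (((t : ℝ) : ℂ) * (1 - Complex.I)) - 1‖ :=
    LA ht.le
  have h2 : ‖(2 : ℂ)‖ = 2 := by norm_num
  rw [hE1, h2]
  calc Real.exp (-((K:ℝ)*t)) * (2 * ‖Complex.exp ((-(Real.pi * x * τ ^ 2) : ℝ) : ℂ)‖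
          * ‖Complex.sinh (((a * t : ℝ) : ℂ) * (1 - Complex.I))‖) /
        ‖Complex.exp (((t : ℝ) : ℂ) * (1 - Complex.I)) - 1‖
      ≤ Real.exp (-((K:ℝ)*t)) * (2 * 1 * (Real.sqrt 2 * (a * t) * Real.exp (a * t))) /
        (Real.sqrt 2 * t) := by gcongr
    _ = 2 * a * Real.exp (-(Real.sqrt 2 * Real.pi * ((K : ℝ) - a)) * τ) := by
        have hexp : Real.exp (-((K:ℝ)*t)) * Real.exp (a*t)
            = Real.exp (-(Real.sqrt 2 * Real.pi * ((K : ℝ) - a)) * τ) := by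
          rw [← Real.exp_add]; congr 1; rw [htdef]; ring
        rw [← hexp]
        have hsne : Real.sqrt 2 ≠ 0 := hs2.ne'
        have htne : t ≠ 0 := ht.ne'
        field_simp

lemma exp_int {c : ℝ} (hc : 0 < c) : ∫ τ in Ioi (0:ℝ), Real.exp (-(c*τ)) = 1/c := by
  have := integral_comp_mul_left_Ioi (fun y => Real.exp (-y)) 0 hc
  simp only [mul_zero] at this
  rw [this, integral_exp_neg_Ioi_zero, smul_eq_mul, mul_one, one_div]

/-- For `0 ≤ a < K`: `|H_K| ≤ √2·2a/(2π(K-a))`, and `H_K → 0` as `K → ∞`. -/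
theorem HK_bound_and_limit (x a : ℝ) (hx : 0 < x) (ha : 0 ≤ a) :
    (∀ K : ℕ, 1 ≤ K → a < K →
        ‖Hfun x a K‖ ≤ Real.sqrt 2 * (2 * a) / (2 * Real.pi * ((K : ℝ) - a))) ∧
    Tendsto (fun K : ℕ => Hfun x a K) atTop (nhds 0) := by
  have hπ := Real.pi_pos
  have hs2 : (0:ℝ) < Real.sqrt 2 := by positivity
  have hss : Real.sqrt 2 * Real.sqrt 2 = 2 := Real.mul_self_sqrt (by norm_num)
  have key : ∀ K : ℕ, a < K →
      ‖Hfun x a K‖ ≤ Real.sqrt 2 * (2 * a) / (2 * Real.pi * ((K : ℝ) - a)) := by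
    intro K hKa
    have hKa' : (0:ℝ) < (K:ℝ) - a := by linarith
    set c : ℝ := Real.sqrt 2 * Real.pi * ((K:ℝ) - a) with hc
    have hcpos : 0 < c := by rw [hc]; exact mul_pos (mul_pos hs2 hπ) hKa'
    have hg : IntegrableOn (fun τ => 2 * a * Real.exp (-(c*τ))) (Ioi (0:ℝ)) := by
      have : IntegrableOn (fun τ => Real.exp (-c*τ)) (Ioi (0:ℝ)) :=
        exp_neg_integrableOn_Ioi 0 hcpos
      simpa [neg_mul, IntegrableOn] using this.const_mul (2*a)
    have hle : ‖Hfun x a K‖ ≤ ∫ τ in Ioi (0:ℝ), 2 * a * Real.exp (-(c*τ)) := by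
      apply norm_integral_le_of_norm_le hg
      filter_upwards [ae_restrict_mem measurableSet_Ioi] with τ hτ
      have hpb := point_bound a x ha hx.le K hτ
      simpa [hc, neg_mul] using hpb
    have hval : ∫ τ in Ioi (0:ℝ), 2 * a * Real.exp (-(c*τ)) = 2 * a / c := by
      rw [integral_const_mul, exp_int hcpos]; ring
    have htarget : Real.sqrt 2 * (2 * a) / (2 * Real.pi * ((K : ℝ) - a)) = 2 * a / c := by
      rw [hc]
      rw [show 2 * Real.pi * ((K : ℝ) - a)
          = Real.sqrt 2 * (Real.sqrt 2 * Real.pi * ((K:ℝ) - a)) by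
          linear_combination (-(Real.pi * ((K:ℝ) - a))) * hss]
      rw [mul_div_mul_left _ _ hs2.ne']
    rw [htarget]
    rw [hval] at hle
    exact hle
  constructor
  · exact fun K _ hKa => key K hKa
  · apply squeeze_zero_norm' (a := fun K : ℕ =>
      Real.sqrt 2 * (2 * a) / (2 * Real.pi) / ((K : ℝ) - a))
    · filter_upwards [eventually_gt_atTop (Nat.ceil a)] with K hK
      have hKa : a < (K : ℝ) := lt_of_le_of_lt (Nat.le_ceil a) (by exact_mod_cast hK)
      have := key K hKa
      calc ‖Hfun x a K‖
          ≤ Real.sqrt 2 * (2 * a) / (2 * Real.pi * ((K : ℝ) - a)) := this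
        _ = Real.sqrt 2 * (2 * a) / (2 * Real.pi) / ((K : ℝ) - a) := by
            rw [div_div]
    · have h1 : Tendsto (fun K : ℕ => (K : ℝ) - a) atTop atTop :=
        tendsto_atTop_add_const_right _ (-a) tendsto_natCast_atTop_atTop
      have h2 : Tendsto (fun K : ℕ => ((K : ℝ) - a)⁻¹) atTop (nhds 0) :=
        h1.inv_tendsto_atTop
      have := h2.const_mul (Real.sqrt 2 * (2 * a) / (2 * Real.pi))
      simpa [div_eq_mul_inv, mul_zero] using this
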